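/- Let X_1,...,X_n be i.i.d. uniform on [0,1] with order statistics X_(1) ≤ ... ≤ X_(n). For r < 1/2, 2 ≤ i ≤ n−1, and 0 ≤ a ≤ i−2, the probability that node i has exactly a leftward neighbors and node i+1 has 0 leftward neighbors in the ordered geometric graph with range r equals C(n,a)·r^a·(1−2r)^{n−a}. -/

import Mathlib

open MeasureTheory

/-- The `k`-th order statistic (1-based, `k`-th smallest) of the values `x`. -/
noncomputable def ordStat {n : ℕ} (x : Fin n → ℝ) (k : ℕ) : ℝ :=
  (List.insertionSort (· ≤ ·) (List.ofFn x)).getD (k - 1) 0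

/-- `L_i`: the number of leftward neighbours of node `i` (1-based) in the ordered
geometric graph with connection range `r`: indices `j < i` with `X_(i) − X_(j) ≤ r`. -/
noncomputable def Lcount {n : ℕ} (r : ℝ) (x : Fin n → ℝ) (i : ℕ) : ℕ :=
  ((Finset.Ico 1 i).filter (fun j => ordStat x i - ordStat x j ≤ r)).card

open List Finset

set_option linter.unusedVariables false


lemma countP_ofFn' {n : ℕ} (f : Fin n → ℝ) (p : ℝ → Prop) [DecidablePred p] :
    (List.ofFn f).countP (fun y => decide (p y)) = (Finset.univ.filter (fun j => p (f j))).card := by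
  rw [List.ofFn_eq_map, List.countP_map, List.countP_eq_length_filter]
  have h : (Finset.univ.filter (fun j => p (f j))).card =
      Multiset.card (Multiset.filter (fun j => p (f j)) (Finset.univ : Finset (Fin n)).val) := rfl
  rw [h, Fin.univ_def]
  simp only [Multiset.filter_coe, Multiset.coe_card]
  rfl

-- count of indices below m
lemma card_filter_lt_val {n m : ℕ} (hm : m ≤ n) :
    ((Finset.univ : Finset (Fin n)).filter (fun j : Fin n => (j : ℕ) < m)).card = m := by
  have : (Finset.univ : Finset (Fin n)).filter (fun j : Fin n => (j : ℕ) < m)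
      = Finset.map (Fin.castLEEmb hm) Finset.univ := by
    ext j
    simp only [Finset.mem_filter, Finset.mem_univ, true_and, Finset.mem_map]
    constructor
    · intro hj; exact ⟨⟨j, hj⟩, by simp⟩
    · rintro ⟨i, -, rfl⟩
      exact i.isLt
  rw [this, Finset.card_map, Finset.card_univ, Fintype.card_fin]

lemma countP_eq_of_classify (l : List ℝ) (p : ℝ → Prop) [DecidablePred p] (m : ℕ)
    (hm : m ≤ l.length) (h : ∀ j : Fin l.length, p (l.get j) ↔ (j : ℕ) < m) :
    l.countP (fun y => decide (p y)) = m := by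
  conv_lhs => rw [← List.ofFn_get l]
  rw [countP_ofFn']
  rw [show (Finset.univ.filter fun j => p (l.get j))
      = (Finset.univ.filter fun j : Fin l.length => (j : ℕ) < m) from by
    ext j; simpa using h j]
  exact card_filter_lt_val hm

lemma classify_of_countP (l : List ℝ) (hs : l.Pairwise (· ≤ ·)) (p : ℝ → Prop) [DecidablePred p]
    (hdc : ∀ y z : ℝ, y ≤ z → p z → p y) (m : ℕ)
    (h : l.countP (fun y => decide (p y)) = m) (j : Fin l.length) :
    p (l.get j) ↔ (j : ℕ) < m := by
  have hcard : (Finset.univ.filter fun j : Fin l.length => p (l.get j)).card = m := by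
    rw [← countP_ofFn' l.get p]
    conv_rhs => rw [← h]
    conv_rhs => rw [← List.ofFn_get l]
  constructor
  · intro hp
    by_contra hjm
    have hsub : Finset.Iic j ⊆ Finset.univ.filter fun j' : Fin l.length => p (l.get j') := by
      intro j' hj'
      simp only [Finset.mem_filter, Finset.mem_univ, true_and]
      exact hdc _ _ ((List.sortedLE_iff_pairwise.mpr hs).monotone_get (Finset.mem_Iic.mp hj')) hp
    have := Finset.card_le_card hsub
    rw [Fin.card_Iic, hcard] at this
    omega
  · intro hjm
    by_contra hp
    have hsub : (Finset.univ.filter fun j' : Fin l.length => p (l.get j')) ⊆ Finset.Iio j := by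
      intro j' hj'
      simp only [Finset.mem_filter, Finset.mem_univ, true_and] at hj'
      rw [Finset.mem_Iio]
      by_contra hge
      exact hp (hdc _ _ ((List.sortedLE_iff_pairwise.mpr hs).monotone_get (le_of_not_gt hge)) hj')
    have := Finset.card_le_card hsub
    rw [Fin.card_Iio, hcard] at this
    omega

lemma strictMono_get_of_sorted_nodup (l : List ℝ) (hs : l.Pairwise (· ≤ ·)) (hn : l.Nodup) :
    StrictMono l.get :=
  (List.sortedLE_iff_pairwise.mpr hs).monotone_get.strictMono_of_injective (List.nodup_iff_injective_get.mp hn)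




section SL
variable {n : ℕ} (x : Fin n → ℝ)

noncomputable def sl : List ℝ := List.insertionSort (· ≤ ·) (List.ofFn x)

noncomputable def vv (m : ℕ) : ℝ := (sl x).getD m 0

lemma sl_length : (sl x).length = n := by
  rw [sl, List.length_insertionSort, List.length_ofFn]

lemma sl_sorted : (sl x).Pairwise (· ≤ ·) := List.pairwise_insertionSort _ _

lemma sl_perm : sl x ~ List.ofFn x := List.perm_insertionSort _ _

lemma sl_nodup (hinj : Function.Injective x) : (sl x).Nodup :=
  ((sl_perm x).nodup_iff).mpr (List.nodup_ofFn.mpr hinj)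

lemma ordStat_eq_vv (k : ℕ) : ordStat x k = vv x (k - 1) := rfl

lemma vv_get {m : ℕ} (hm : m < n) :
    vv x m = (sl x).get ⟨m, by rw [sl_length]; exact hm⟩ := by
  rw [vv, List.getD_eq_getElem _ _ (by rw [sl_length]; exact hm)]
  rfl

lemma vv_le_vv {m m' : ℕ} (h : m ≤ m') (h' : m' < n) : vv x m ≤ vv x m' := by
  rw [vv_get x (lt_of_le_of_lt h h'), vv_get x h']
  exact (List.sortedLE_iff_pairwise.mpr (sl_sorted x)).monotone_get (by simpa using h)

lemma vv_lt_vv (hinj : Function.Injective x) {m m' : ℕ} (h : m < m') (h' : m' < n) :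
    vv x m < vv x m' := by
  rw [vv_get x (lt_trans h h'), vv_get x h']
  exact strictMono_get_of_sorted_nodup _ (sl_sorted x) (sl_nodup x hinj) (by simpa using h)

lemma vv_mem {m : ℕ} (hm : m < n) : ∃ k, x k = vv x m := by
  have : vv x m ∈ sl x := by rw [vv_get x hm]; exact List.get_mem _ _
  have : vv x m ∈ List.ofFn x := (sl_perm x).mem_iff.mp this
  rw [List.mem_ofFn] at this
  obtain ⟨k, hk⟩ := this
  exact ⟨k, hk⟩

/-- counting bridge: if `p ∘ vv` is exactly `· < m`, then `#{j | p (x j)} = m`. -/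
lemma card_filter_comp (p : ℝ → Prop) [DecidablePred p] (m : ℕ) (hm : m ≤ n)
    (hcl : ∀ mm, mm < n → (p (vv x mm) ↔ mm < m)) :
    (Finset.univ.filter fun j => p (x j)).card = m := by
  rw [← countP_ofFn', ← (sl_perm x).countP_eq]
  refine countP_eq_of_classify _ _ m (by rw [sl_length]; exact hm) (fun j => ?_)
  have hj : (j : ℕ) < n := lt_of_lt_of_le j.isLt (le_of_eq (sl_length x))
  rw [show (sl x).get j = vv x (j : ℕ) from by rw [vv_get x hj]]
  exact hcl _ hj

/-- converse: from the card of a down-closed filter, classify `vv`. -/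
lemma classify_comp (p : ℝ → Prop) [DecidablePred p]
    (hdc : ∀ y z : ℝ, y ≤ z → p z → p y) (m : ℕ)
    (hcard : (Finset.univ.filter fun j => p (x j)).card = m)
    {mm : ℕ} (hmm : mm < n) : p (vv x mm) ↔ mm < m := by
  have h : (sl x).countP (fun y => decide (p y)) = m := by
    rw [(sl_perm x).countP_eq, countP_ofFn']; exact hcard
  have := classify_of_countP (sl x) (sl_sorted x) p hdc m h
    ⟨mm, by rw [sl_length]; exact hmm⟩
  rw [show (sl x).get ⟨mm, by rw [sl_length]; exact hmm⟩ = vv x mm from (vv_get x hmm).symm] at this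
  exact this

end SL
section Event
variable {n : ℕ} (x : Fin n → ℝ)

lemma vv_sub_ne {r : ℝ} (hinj : Function.Injective x)
    (hner : ∀ j j' : Fin n, j ≠ j' → x j - x j' ≠ r)
    {m m' : ℕ} (hm : m < n) (hm' : m' < n) (hne : m ≠ m') :
    vv x m - vv x m' ≠ r := by
  obtain ⟨k, hk⟩ := vv_mem x hm
  obtain ⟨k', hk'⟩ := vv_mem x hm'
  have hvne : vv x m ≠ vv x m' := by
    rcases Nat.lt_or_ge m m' with h | h
    · exact ne_of_lt (vv_lt_vv x hinj h hm')
    · have : m' < m := lt_of_le_of_ne h (Ne.symm hne)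
      exact (ne_of_lt (vv_lt_vv x hinj this hm)).symm
  have hkk : k ≠ k' := by
    intro e; apply hvne; rw [← hk, ← hk', e]
  rw [← hk, ← hk']
  exact hner k k' hkk

lemma event_iff {r : ℝ} (hr0 : 0 < r) {i a : ℕ} (hi : 2 ≤ i) (hin : i ≤ n - 1)
    (ha : a + 2 ≤ i) (hinj : Function.Injective x)
    (hner : ∀ j j' : Fin n, j ≠ j' → x j - x j' ≠ r) :
    (Lcount r x i = a ∧ Lcount r x (i + 1) = 0) ↔
      (vv x (i - 2 - a) < vv x (i - 1) - r ∧ vv x (i - 1) - r < vv x (i - 1 - a) ∧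
        vv x (i - 1) + r < vv x i) := by
  have hn : i < n := by omega
  have hi1 : i - 1 < n := by omega
  have hLc : Lcount r x i =
      ((Finset.Ico 1 i).filter (fun j => vv x (i - 1) - vv x (j - 1) ≤ r)).card := rfl
  have hLc2 : Lcount r x (i + 1) =
      ((Finset.Ico 1 (i + 1)).filter (fun j => vv x i - vv x (j - 1) ≤ r)).card := by
    have : ordStat x (i + 1) = vv x i := by rw [ordStat_eq_vv]; norm_num
    simp only [Lcount, ordStat_eq_vv]
    norm_num
  constructor
  · rintro ⟨h1, h2⟩
    rw [hLc] at h1; rw [hLc2] at h2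
    refine ⟨?_, ?_, ?_⟩
    · -- vv (i-2-a) < vv (i-1) - r
      by_contra hc
      push_neg at hc
      have hsub : Finset.Ico (i - a - 1) i ⊆
          (Finset.Ico 1 i).filter (fun j => vv x (i - 1) - vv x (j - 1) ≤ r) := by
        intro j hj
        rw [Finset.mem_Ico] at hj
        rw [Finset.mem_filter, Finset.mem_Ico]
        refine ⟨⟨by omega, hj.2⟩, ?_⟩
        have hle : vv x (i - 2 - a) ≤ vv x (j - 1) :=
          vv_le_vv x (by omega) (by omega)
        linarith
      have := Finset.card_le_card hsub
      rw [h1, Nat.card_Ico] at this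
      omega
    · -- vv (i-1) - r < vv (i-1-a)
      rcases Nat.eq_zero_or_pos a with rfl | hap
      · simp only [Nat.sub_zero]; linarith
      by_contra hc
      push_neg at hc
      have hne : vv x (i - 1) - vv x (i - 1 - a) ≠ r :=
        vv_sub_ne x hinj hner hi1 (by omega) (by omega)
      have hgt : r < vv x (i - 1) - vv x (i - 1 - a) := by
        rcases lt_or_ge r (vv x (i-1) - vv x (i-1-a)) with h | h
        · exact h
        · exact absurd (le_antisymm (by linarith) h) hne.symm
      have hsub : (Finset.Ico 1 i).filter (fun j => vv x (i - 1) - vv x (j - 1) ≤ r) ⊆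
          Finset.Ico (i - a + 1) i := by
        intro j hj
        rw [Finset.mem_filter, Finset.mem_Ico] at hj
        obtain ⟨⟨hj1, hj2⟩, hjp⟩ := hj
        rw [Finset.mem_Ico]
        refine ⟨?_, hj2⟩
        by_contra hcc
        push_neg at hcc
        have : vv x (j - 1) ≤ vv x (i - 1 - a) := vv_le_vv x (by omega) (by omega)
        linarith
      have := Finset.card_le_card hsub
      rw [h1, Nat.card_Ico] at this
      omega
    · -- vv (i-1) + r < vv i
      by_contra hc
      push_neg at hc
      have hmem : i ∈ (Finset.Ico 1 (i + 1)).filter (fun j => vv x i - vv x (j - 1) ≤ r) := by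
        rw [Finset.mem_filter, Finset.mem_Ico]
        exact ⟨⟨by omega, by omega⟩, by linarith⟩
      have := Finset.card_ne_zero_of_mem hmem
      omega
  · rintro ⟨q1, q2, q3⟩
    constructor
    · rw [hLc]
      have : (Finset.Ico 1 i).filter (fun j => vv x (i - 1) - vv x (j - 1) ≤ r) =
          Finset.Ico (i - a) i := by
        ext j
        rw [Finset.mem_filter, Finset.mem_Ico, Finset.mem_Ico]
        constructor
        · rintro ⟨⟨hj1, hj2⟩, hp⟩
          refine ⟨?_, hj2⟩
          by_contra hcc
          push_neg at hcc
          have : vv x (j - 1) ≤ vv x (i - 2 - a) := vv_le_vv x (by omega) (by omega)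
          linarith
        · rintro ⟨hj1, hj2⟩
          refine ⟨⟨by omega, hj2⟩, ?_⟩
          have : vv x (i - 1 - a) ≤ vv x (j - 1) := vv_le_vv x (by omega) (by omega)
          linarith
      rw [this, Nat.card_Ico]
      omega
    · rw [hLc2, Finset.card_eq_zero, Finset.filter_eq_empty_iff]
      intro j hj
      rw [Finset.mem_Ico] at hj
      have : vv x (j - 1) ≤ vv x (i - 1) := vv_le_vv x (by omega) hi1
      push_neg
      linarith
end Event
section Pieces
variable {n : ℕ}

lemma exists_vv_eq (x : Fin n → ℝ) (j : Fin n) : ∃ mm, mm < n ∧ vv x mm = x j := by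
  have hmem : x j ∈ sl x := (sl_perm x).mem_iff.mpr (by rw [List.mem_ofFn]; exact ⟨j, rfl⟩)
  obtain ⟨m, hm⟩ := List.get_of_mem hmem
  refine ⟨(m : ℕ), lt_of_lt_of_le m.isLt (le_of_eq (sl_length x)), ?_⟩
  rw [vv, List.getD_eq_getElem _ _ m.isLt]
  exact hm

/-- the band in which coordinate `j` must lie, as a function of the pivot value `t`. -/
def bandSet (r t : ℝ) (A B : Finset (Fin n)) (j : Fin n) : Set ℝ :=
  if j ∈ A then Set.Ioo 0 (t - r) else if j ∈ B then Set.Ioo (t - r) t else Set.Ioo (t + r) 1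

/-- one cell of the decomposition of the event -/
def piece (r : ℝ) (k : Fin n) (A B : Finset (Fin n)) : Set (Fin n → ℝ) :=
  {x | ∀ j : Fin n, j ≠ k → x j ∈ bandSet r (x k) A B j}

variable (r : ℝ) (i a : ℕ) (x : Fin n → ℝ)

lemma cover_forward (hr0 : 0 < r) (hi : 2 ≤ i) (hin : i ≤ n - 1) (ha : a + 2 ≤ i)
    (hinj : Function.Injective x)
    (hner : ∀ j j' : Fin n, j ≠ j' → x j - x j' ≠ r)
    (hcube : ∀ j, x j ∈ Set.Icc (0:ℝ) 1)
    (h0 : ∀ j, x j ≠ 0) (h1 : ∀ j, x j ≠ 1)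
    (q1 : vv x (i - 2 - a) < vv x (i - 1) - r)
    (q2 : vv x (i - 1) - r < vv x (i - 1 - a))
    (q3 : vv x (i - 1) + r < vv x i) :
    ∃ k : Fin n, ∃ A B : Finset (Fin n), A ⊆ Finset.univ.erase k ∧
      B ⊆ (Finset.univ.erase k) \ A ∧ A.card = i - 1 - a ∧ B.card = a ∧
      x ∈ piece r k A B := by
  have hn : i < n := by omega
  have hi1 : i - 1 < n := by omega
  obtain ⟨k, hk⟩ := vv_mem x hi1
  set t := vv x (i - 1) with htdef
  have hxk : x k = t := hk
  -- A and B
  set A : Finset (Fin n) := Finset.univ.filter (fun j => x j < t - r) with hAdef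
  set B : Finset (Fin n) := Finset.univ.filter (fun j => x j < t) \ A with hBdef
  have cardA : A.card = i - 1 - a := by
    refine card_filter_comp x (fun y => y < t - r) (i - 1 - a) (by omega) (fun mm hmm => ?_)
    constructor
    · intro hv
      by_contra hcc
      push_neg at hcc
      have : vv x (i - 1 - a) ≤ vv x mm := vv_le_vv x hcc hmm
      linarith
    · intro hmm2
      have : vv x mm ≤ vv x (i - 2 - a) := vv_le_vv x (by omega) (by omega)
      linarith
  have cardC2 : (Finset.univ.filter (fun j => x j < t)).card = i - 1 := by
    refine card_filter_comp x (fun y => y < t) (i - 1) (by omega) (fun mm hmm => ?_)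
    constructor
    · intro hv
      by_contra hcc
      push_neg at hcc
      have : vv x (i - 1) ≤ vv x mm := vv_le_vv x hcc hmm
      linarith
    · intro hmm2
      exact vv_lt_vv x hinj hmm2 hi1
  have hAsub : A ⊆ Finset.univ.filter (fun j => x j < t) := by
    intro j hj
    rw [hAdef, Finset.mem_filter] at hj
    rw [Finset.mem_filter]
    exact ⟨hj.1, by linarith [hj.2]⟩
  have cardB : B.card = a := by
    rw [hBdef, Finset.card_sdiff_of_subset hAsub, cardA, cardC2]
    omega
  -- memberships
  have hkA : k ∉ A := by
    rw [hAdef, Finset.mem_filter]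
    push_neg
    intro _
    rw [hxk]
    linarith
  have hkC2 : k ∉ Finset.univ.filter (fun j => x j < t) := by
    rw [Finset.mem_filter]
    simp [hxk]
  have hkB : k ∉ B := fun h => hkC2 (Finset.mem_sdiff.mp h).1
  refine ⟨k, A, B, ?_, ?_, cardA, cardB, ?_⟩
  · intro j hj
    rw [Finset.mem_erase]
    exact ⟨fun e => hkA (e ▸ hj), Finset.mem_univ _⟩
  · intro j hj
    have hjA : j ∉ A := (Finset.mem_sdiff.mp hj).2
    refine Finset.mem_sdiff.mpr ⟨Finset.mem_erase.mpr ⟨?_, Finset.mem_univ _⟩, hjA⟩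
    intro e; exact hkB (e ▸ hj)
  · -- piece membership
    intro j hjk
    have hxj0 : 0 < x j := lt_of_le_of_ne (hcube j).1 (Ne.symm (h0 j))
    have hxj1 : x j < 1 := lt_of_le_of_ne (hcube j).2 (h1 j)
    have hne_t : x j ≠ t := by
      rw [← hxk]; exact fun e => hjk (hinj e)
    rcases lt_or_gt_of_ne hne_t with hlt | hgt
    · -- below t : in A-band or B-band
      have hjC2 : j ∈ Finset.univ.filter (fun j => x j < t) :=
        Finset.mem_filter.mpr ⟨Finset.mem_univ _, hlt⟩
      have hne_tr : x j ≠ t - r := by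
        intro e
        apply hner k j hjk.symm
        rw [hxk, e]; ring
      rcases lt_or_gt_of_ne hne_tr with hlt2 | hgt2
      · have hjA : j ∈ A := Finset.mem_filter.mpr ⟨Finset.mem_univ _, hlt2⟩
        show x j ∈ bandSet r (x k) A B j
        rw [hxk, bandSet, if_pos hjA]
        exact ⟨hxj0, hlt2⟩
      · have hjA : j ∉ A := by
          rw [hAdef, Finset.mem_filter]
          push_neg
          intro _
          linarith
        have hjB : j ∈ B := by
          rw [hBdef, Finset.mem_sdiff]
          exact ⟨hjC2, hjA⟩
        show x j ∈ bandSet r (x k) A B j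
        rw [hxk, bandSet, if_neg hjA, if_pos hjB]
        exact ⟨hgt2, hlt⟩
    · -- above t : in C-band
      obtain ⟨mm, hmm, hvm⟩ := exists_vv_eq x j
      have hmmgt : i - 1 < mm := by
        by_contra hcc
        push_neg at hcc
        have : vv x mm ≤ vv x (i - 1) := vv_le_vv x hcc hi1
        rw [hvm] at this
        linarith
      have hge : vv x i ≤ vv x mm := vv_le_vv x (by omega) hmm
      have hjA : j ∉ A := by
        rw [hAdef, Finset.mem_filter]; push_neg; intro _; linarith
      have hjB : j ∉ B := by
        rw [hBdef, Finset.mem_sdiff, Finset.mem_filter]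
        push_neg
        intro h
        exfalso
        linarith [h.2]
      show x j ∈ bandSet r (x k) A B j
      rw [hxk, bandSet, if_neg hjA, if_neg hjB]
      rw [hvm] at hge
      exact ⟨by linarith, hxj1⟩
end Pieces
section Backward
variable {n : ℕ} (r : ℝ) (i a : ℕ) (x : Fin n → ℝ)

lemma cover_backward (hr0 : 0 < r) (hi : 2 ≤ i) (hin : i ≤ n - 1) (ha : a + 2 ≤ i)
    (hinj : Function.Injective x)
    (hner : ∀ j j' : Fin n, j ≠ j' → x j - x j' ≠ r)
    (k : Fin n) (A B : Finset (Fin n)) (hA : A ⊆ Finset.univ.erase k)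
    (hB : B ⊆ (Finset.univ.erase k) \ A) (cardA : A.card = i - 1 - a) (cardB : B.card = a)
    (hx : x ∈ piece r k A B) :
    (∀ j, x j ∈ Set.Icc (0:ℝ) 1) ∧
      vv x (i - 2 - a) < vv x (i - 1) - r ∧ vv x (i - 1) - r < vv x (i - 1 - a) ∧
      vv x (i - 1) + r < vv x i := by
  have hn : i < n := by omega
  have hi1 : i - 1 < n := by omega
  set t := x k with htdef
  have hband : ∀ j : Fin n, j ≠ k → x j ∈ bandSet r t A B j := hx
  have memA : ∀ j ∈ A, x j ∈ Set.Ioo 0 (t - r) := by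
    intro j hj
    have hjk : j ≠ k := Finset.ne_of_mem_erase (hA hj)
    have := hband j hjk
    rwa [bandSet, if_pos hj] at this
  have memB : ∀ j ∈ B, x j ∈ Set.Ioo (t - r) t := by
    intro j hj
    have hj' := hB hj
    rw [Finset.mem_sdiff] at hj'
    have hjk : j ≠ k := Finset.ne_of_mem_erase hj'.1
    have := hband j hjk
    rwa [bandSet, if_neg hj'.2, if_pos hj] at this
  have memC : ∀ j : Fin n, j ≠ k → j ∉ A → j ∉ B → x j ∈ Set.Ioo (t + r) 1 := by
    intro j hjk hjA hjB
    have := hband j hjk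
    rwa [bandSet, if_neg hjA, if_neg hjB] at this
  have hdisj : Disjoint A B := by
    rw [Finset.disjoint_left]
    intro j hjA hjB
    exact ((Finset.mem_sdiff.mp (hB hjB)).2) hjA
  -- C nonempty
  have cardErase : (Finset.univ.erase k).card = n - 1 := by
    rw [Finset.card_erase_of_mem (Finset.mem_univ _), Finset.card_univ, Fintype.card_fin]
  have cardC : (((Finset.univ.erase k) \ A) \ B).card = n - i := by
    rw [Finset.card_sdiff_of_subset hB, Finset.card_sdiff_of_subset hA, cardErase, cardA, cardB]
    omega
  have hCne : (((Finset.univ.erase k) \ A) \ B).Nonempty := by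
    rw [← Finset.card_pos, cardC]; omega
  obtain ⟨jC, hjC⟩ := hCne
  have hjCprops := Finset.mem_sdiff.mp hjC
  have hjCprops2 := Finset.mem_sdiff.mp hjCprops.1
  have hjCk : jC ≠ k := Finset.ne_of_mem_erase hjCprops2.1
  have hxjC : x jC ∈ Set.Ioo (t + r) 1 := memC jC hjCk hjCprops2.2 hjCprops.2
  have ht1 : t + r < 1 := by
    have := hxjC
    rw [Set.mem_Ioo] at this
    linarith
  have hAne : A.Nonempty := by
    rw [← Finset.card_pos, cardA]; omega
  obtain ⟨jA, hjA⟩ := hAne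
  have hxjA := memA jA hjA
  rw [Set.mem_Ioo] at hxjA
  have htr : r < t := by linarith
  -- cube
  have hcube : ∀ j, x j ∈ Set.Icc (0:ℝ) 1 := by
    intro j
    rcases eq_or_ne j k with rfl | hjk
    · exact ⟨by linarith, by linarith⟩
    by_cases hA' : j ∈ A
    · have := memA j hA'; rw [Set.mem_Ioo] at this
      exact ⟨le_of_lt this.1, by linarith [this.2]⟩
    by_cases hB' : j ∈ B
    · have := memB j hB'; rw [Set.mem_Ioo] at this
      exact ⟨by linarith [this.1], by linarith [this.2]⟩
    · have := memC j hjk hA' hB'; rw [Set.mem_Ioo] at this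
      exact ⟨by linarith [this.1], le_of_lt this.2⟩
  -- counts
  have hS1 : Finset.univ.filter (fun j => x j < t - r) = A := by
    ext j
    rw [Finset.mem_filter]
    constructor
    · rintro ⟨-, hlt⟩
      by_contra hjA'
      rcases eq_or_ne j k with rfl | hjk
      · linarith
      by_cases hB' : j ∈ B
      · have := memB j hB'; rw [Set.mem_Ioo] at this; linarith [this.1]
      · have := memC j hjk hjA' hB'; rw [Set.mem_Ioo] at this; linarith [this.1]
    · intro hjA'
      have := memA j hjA'; rw [Set.mem_Ioo] at this
      exact ⟨Finset.mem_univ _, this.2⟩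
  have hS2 : Finset.univ.filter (fun j => x j < t) = A ∪ B := by
    ext j
    rw [Finset.mem_filter, Finset.mem_union]
    constructor
    · rintro ⟨-, hlt⟩
      by_contra hjAB
      push_neg at hjAB
      rcases eq_or_ne j k with rfl | hjk
      · linarith
      have := memC j hjk hjAB.1 hjAB.2; rw [Set.mem_Ioo] at this; linarith [this.1]
    · rintro (hj | hj)
      · have := memA j hj; rw [Set.mem_Ioo] at this
        exact ⟨Finset.mem_univ _, by linarith [this.2]⟩
      · have := memB j hj; rw [Set.mem_Ioo] at this
        exact ⟨Finset.mem_univ _, this.2⟩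
  have hS3 : Finset.univ.filter (fun j => x j ≤ t) = insert k (A ∪ B) := by
    ext j
    rw [Finset.mem_filter, Finset.mem_insert, Finset.mem_union]
    constructor
    · rintro ⟨-, hle⟩
      by_contra hj'
      push_neg at hj'
      have := memC j hj'.1 hj'.2.1 hj'.2.2; rw [Set.mem_Ioo] at this; linarith [this.1]
    · rintro (rfl | hj | hj)
      · exact ⟨Finset.mem_univ _, le_refl _⟩
      · have := memA j hj; rw [Set.mem_Ioo] at this
        exact ⟨Finset.mem_univ _, by linarith [this.2]⟩
      · have := memB j hj; rw [Set.mem_Ioo] at this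
        exact ⟨Finset.mem_univ _, le_of_lt this.2⟩
  have hkAB : k ∉ A ∪ B := by
    rw [Finset.mem_union]
    rintro (h | h)
    · have := memA k h; rw [Set.mem_Ioo] at this; linarith [this.2]
    · have := memB k h; rw [Set.mem_Ioo] at this; linarith [this.2]
  have cardS1 : (Finset.univ.filter (fun j => x j < t - r)).card = i - 1 - a := by
    rw [hS1, cardA]
  have cardS2 : (Finset.univ.filter (fun j => x j < t)).card = i - 1 := by
    rw [hS2, Finset.card_union_of_disjoint hdisj, cardA, cardB]; omega
  have cardS3 : (Finset.univ.filter (fun j => x j ≤ t)).card = i := by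
    rw [hS3, Finset.card_insert_of_notMem hkAB, Finset.card_union_of_disjoint hdisj,
      cardA, cardB]
    omega
  have cl1 := fun {mm : ℕ} (h : mm < n) => classify_comp x (fun y => y < t - r)
    (fun y z hyz hz => lt_of_le_of_lt hyz hz) (i - 1 - a) cardS1 h
  have cl2 := fun {mm : ℕ} (h : mm < n) => classify_comp x (fun y => y < t)
    (fun y z hyz hz => lt_of_le_of_lt hyz hz) (i - 1) cardS2 h
  have cl3 := fun {mm : ℕ} (h : mm < n) => classify_comp x (fun y => y ≤ t)
    (fun y z hyz hz => le_trans hyz hz) i cardS3 h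
  -- vv (i-1) = t
  have veq : vv x (i - 1) = t := by
    have hle : vv x (i - 1) ≤ t := (cl3 hi1).mpr (by omega)
    have hge : ¬ vv x (i - 1) < t := fun h => by
      have := (cl2 hi1).mp h; omega
    push_neg at hge
    exact le_antisymm hle hge
  refine ⟨hcube, ?_, ?_, ?_⟩
  · have := (cl1 (show i - 2 - a < n by omega)).mpr (by omega)
    rw [veq]; exact this
  · rcases Nat.eq_zero_or_pos a with rfl | hap
    · rw [Nat.sub_zero]; linarith
    have hge : ¬ vv x (i - 1 - a) < t - r := fun h => by
      have := (cl1 (show i - 1 - a < n by omega)).mp h; omega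
    push_neg at hge
    have hne : vv x (i - 1 - a) ≠ t - r := by
      obtain ⟨j', hj'⟩ := vv_mem x (show i - 1 - a < n by omega)
      rw [← hj']
      rcases eq_or_ne j' k with rfl | hjk
      · rw [htdef]; intro h; linarith
      · intro h
        apply hner k j' hjk.symm
        rw [h, htdef]; ring
    rw [veq]
    rcases lt_or_eq_of_le hge with h | h
    · linarith
    · exact absurd h.symm hne
  · have hgt : ¬ vv x i ≤ t := fun h => by
      have := (cl3 hn).mp h; omega
    push_neg at hgt
    obtain ⟨j', hj'⟩ := vv_mem x hn
    have hjk : j' ≠ k := by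
      intro e
      rw [e, ← htdef] at hj'
      linarith [hj' ▸ hgt]
    have hjA : j' ∉ A := by
      intro h
      have := memA j' h; rw [Set.mem_Ioo] at this
      rw [hj'] at this
      linarith [this.2]
    have hjB : j' ∉ B := by
      intro h
      have := memB j' h; rw [Set.mem_Ioo] at this
      rw [hj'] at this
      linarith [this.2]
    have := memC j' hjk hjA hjB
    rw [Set.mem_Ioo, hj'] at this
    rw [veq]
    linarith [this.1]
end Backward
section NullSets
variable {n : ℕ}

lemma null_of_linear_eq (f : (Fin n → ℝ) →ₗ[ℝ] ℝ) (hf : f ≠ 0) (c : ℝ) :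
    volume {x : Fin n → ℝ | f x = c} = 0 := by
  obtain ⟨w, hw⟩ : ∃ w, f w ≠ 0 := by
    by_contra h
    push_neg at h
    exact hf (LinearMap.ext fun w => by rw [h w]; rfl)
  set p : Fin n → ℝ := (c / f w) • w with hp
  have hfp : f p = c := by
    rw [hp, LinearMap.map_smul, smul_eq_mul]
    field_simp
  have hset : {x : Fin n → ℝ | f x = c} = (AffineSubspace.mk' p (LinearMap.ker f) : Set (Fin n → ℝ)) := by
    ext y
    rw [Set.mem_setOf_eq, SetLike.mem_coe, AffineSubspace.mem_mk', LinearMap.mem_ker]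
    constructor
    · intro h
      show f (y - p) = 0
      rw [map_sub, h, hfp, sub_self]
    · intro h
      have : f (y - p) = 0 := h
      rw [map_sub, hfp] at this
      linarith
  rw [hset]
  refine Measure.addHaar_affineSubspace volume _ ?_
  intro htop
  have : LinearMap.ker f = ⊤ := by
    have := AffineSubspace.direction_mk' p (LinearMap.ker f)
    rw [htop, AffineSubspace.direction_top] at this
    exact this.symm
  exact hf (LinearMap.ker_eq_top.mp this)

lemma null_diff_eq (j j' : Fin n) (hjj : j ≠ j') (c : ℝ) :
    volume {x : Fin n → ℝ | x j - x j' = c} = 0 := by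
  have h := null_of_linear_eq (LinearMap.proj (R := ℝ) (φ := fun _ : Fin n => ℝ) j
    - LinearMap.proj j') ?_ c
  · exact h
  · intro hzero
    have h1 := DFunLike.congr_fun hzero (Pi.single j 1)
    simp only [LinearMap.sub_apply, LinearMap.proj_apply, LinearMap.zero_apply] at h1
    rw [Pi.single_eq_same, Pi.single_eq_of_ne (Ne.symm hjj)] at h1
    norm_num at h1

lemma null_coord_eq (j : Fin n) (c : ℝ) :
    volume {x : Fin n → ℝ | x j = c} = 0 := by
  have h := null_of_linear_eq (LinearMap.proj (R := ℝ) (φ := fun _ : Fin n => ℝ) j) ?_ c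
  · exact h
  · intro hzero
    have h1 := DFunLike.congr_fun hzero (Pi.single j 1)
    simp only [LinearMap.proj_apply, LinearMap.zero_apply] at h1
    rw [Pi.single_eq_same] at h1
    norm_num at h1
end NullSets

section Beta

lemma beta_integral (s : ℝ) :
    ∀ (q p : ℕ), ∫ u in (0:ℝ)..s, u ^ p * (s - u) ^ q
      = ((p.factorial : ℝ) * q.factorial / (p + q + 1).factorial) * s ^ (p + q + 1) := by
  intro q
  induction q with
  | zero =>
    intro p
    simp only [pow_zero, mul_one, Nat.factorial_zero, Nat.cast_one, Nat.add_zero]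
    rw [integral_pow]
    have : ((p + 1).factorial : ℝ) = (p + 1) * p.factorial := by
      rw [Nat.factorial_succ]; push_cast; ring
    rw [this]
    have hpos : (0:ℝ) < p + 1 := by positivity
    field_simp
    ring
  | succ q ih =>
    intro p
    have hp1 : ((p:ℝ) + 1) ≠ 0 := by positivity
    have key : ∀ u ∈ Set.uIcc (0:ℝ) s,
        HasDerivAt (fun u : ℝ => u ^ (p+1) * (s - u) ^ (q+1) / ((p:ℝ)+1))
          (u ^ p * (s - u) ^ (q+1) - (((q:ℝ)+1) / ((p:ℝ)+1)) * (u ^ (p+1) * (s - u) ^ q)) u := by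
      intro u _
      have h1 : HasDerivAt (fun u : ℝ => u ^ (p+1)) (((p:ℝ)+1) * u ^ p) u := by
        have := hasDerivAt_pow (p+1) u
        simpa using this
      have h2 : HasDerivAt (fun u : ℝ => (s - u) ^ (q+1)) (-(((q:ℝ)+1) * (s - u) ^ q)) u := by
        have hin : HasDerivAt (fun u : ℝ => s - u) (-1) u := (hasDerivAt_id u).const_sub s
        have hout := hasDerivAt_pow (q+1) (s - u)
        have := hout.comp u hin
        simpa [Function.comp_def] using this
      have := (h1.mul h2).div_const ((p:ℝ)+1)
      refine HasDerivAt.congr_deriv this ?_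
      rw [div_eq_iff hp1]
      linear_combination (u ^ (p+1) * (s - u) ^ q) * (div_mul_cancel₀ ((q:ℝ)+1) hp1)
    have hInt1 : IntervalIntegrable (fun u : ℝ => u ^ p * (s - u) ^ (q+1)) volume 0 s := by
      apply Continuous.intervalIntegrable
      continuity
    have hInt2 : IntervalIntegrable
        (fun u : ℝ => (((q:ℝ)+1) / ((p:ℝ)+1)) * (u ^ (p+1) * (s - u) ^ q)) volume 0 s := by
      apply Continuous.intervalIntegrable
      continuity
    have heq := intervalIntegral.integral_eq_sub_of_hasDerivAt key (hInt1.sub hInt2)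
    rw [intervalIntegral.integral_sub hInt1 hInt2] at heq
    have hz : (fun u : ℝ => u ^ (p+1) * (s - u) ^ (q+1) / ((p:ℝ)+1)) s -
        (fun u : ℝ => u ^ (p+1) * (s - u) ^ (q+1) / ((p:ℝ)+1)) 0 = 0 := by
      simp [zero_pow, sub_self]
    rw [hz] at heq
    have hmul : ∫ u in (0:ℝ)..s, (((q:ℝ)+1) / ((p:ℝ)+1)) * (u ^ (p+1) * (s - u) ^ q)
        = (((q:ℝ)+1) / ((p:ℝ)+1)) * ∫ u in (0:ℝ)..s, u ^ (p+1) * (s - u) ^ q :=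
      intervalIntegral.integral_const_mul _ _
    rw [hmul, ih (p+1)] at heq
    have : ∫ u in (0:ℝ)..s, u ^ p * (s - u) ^ (q+1)
        = (((q:ℝ)+1) / ((p:ℝ)+1)) * (((p+1).factorial : ℝ) * q.factorial
            / ((p + 1) + q + 1).factorial * s ^ ((p + 1) + q + 1)) := by linarith
    rw [this]
    have e1 : ((p+1).factorial : ℝ) = ((p:ℝ)+1) * p.factorial := by
      rw [Nat.factorial_succ]; push_cast; ring
    have e2 : ((q+1).factorial : ℝ) = ((q:ℝ)+1) * q.factorial := by
      rw [Nat.factorial_succ]; push_cast; ring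
    have e3 : (p + 1) + q + 1 = p + (q + 1) + 1 := by omega
    rw [e3, e1, e2]
    field_simp
end Beta
section PieceVol
variable {n : ℕ}

lemma measurableSet_bandmem (r : ℝ) (A B : Finset (Fin n)) (k j : Fin n) :
    MeasurableSet {x : Fin n → ℝ | x j ∈ bandSet r (x k) A B j} := by
  have hj : Measurable fun x : Fin n → ℝ => x j := measurable_pi_apply j
  have hk : Measurable fun x : Fin n → ℝ => x k := measurable_pi_apply k
  by_cases h1 : j ∈ A
  · have : {x : Fin n → ℝ | x j ∈ bandSet r (x k) A B j}
        = {x | 0 < x j} ∩ {x | x j < x k - r} := by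
      ext x
      simp only [bandSet, if_pos h1, Set.mem_setOf_eq, Set.mem_Ioo, Set.mem_inter_iff]
    rw [this]
    exact (measurableSet_lt measurable_const hj).inter
      (measurableSet_lt hj (hk.sub measurable_const))
  by_cases h2 : j ∈ B
  · have : {x : Fin n → ℝ | x j ∈ bandSet r (x k) A B j}
        = {x | x k - r < x j} ∩ {x | x j < x k} := by
      ext x
      simp only [bandSet, if_neg h1, if_pos h2, Set.mem_setOf_eq, Set.mem_Ioo, Set.mem_inter_iff]
    rw [this]
    exact (measurableSet_lt (hk.sub measurable_const) hj).inter (measurableSet_lt hj hk)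
  · have : {x : Fin n → ℝ | x j ∈ bandSet r (x k) A B j}
        = {x | x k + r < x j} ∩ {x | x j < 1} := by
      ext x
      simp only [bandSet, if_neg h1, if_neg h2, Set.mem_setOf_eq, Set.mem_Ioo, Set.mem_inter_iff]
    rw [this]
    exact (measurableSet_lt (hk.add measurable_const) hj).inter
      (measurableSet_lt hj measurable_const)

lemma measurableSet_piece (r : ℝ) (k : Fin n) (A B : Finset (Fin n)) :
    MeasurableSet (piece r k A B) := by
  have heq : piece r k A B
      = ⋂ j ∈ Finset.univ.erase k, {x : Fin n → ℝ | x j ∈ bandSet r (x k) A B j} := by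
    ext x
    rw [Set.mem_iInter₂]
    constructor
    · intro hx j hj
      exact hx j (Finset.mem_erase.mp hj).1
    · intro hx j hj
      exact hx j (Finset.mem_erase.mpr ⟨hj, Finset.mem_univ _⟩)
  rw [heq]
  exact Set.Finite.measurableSet_biInter (Set.toFinite _)
    (fun j _ => measurableSet_bandmem r A B k j)

lemma volume_piece (r : ℝ) (hr0 : 0 < r) (hr : r < 1/2) (i a : ℕ)
    (hi : 2 ≤ i) (hin : i ≤ n - 1) (ha : a + 2 ≤ i)
    (k : Fin n) (A B : Finset (Fin n)) (hA : A ⊆ Finset.univ.erase k)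
    (hB : B ⊆ (Finset.univ.erase k) \ A) (cardA : A.card = i - 1 - a) (cardB : B.card = a) :
    volume (piece r k A B)
      = ENNReal.ofReal (r ^ a * (((i - 1 - a).factorial : ℝ) * ((n - i).factorial : ℝ)
          / ((n - a).factorial : ℝ)) * (1 - 2 * r) ^ (n - a)) := by
  classical
  set p : ℕ := i - 1 - a with hp
  set q : ℕ := n - i with hq
  have hn : i < n := by omega
  have hp1 : 1 ≤ p := by omega
  have hq1 : 1 ≤ q := by omega
  letI : Unique {j : Fin n // j = k} := ⟨⟨⟨k, rfl⟩⟩, by rintro ⟨a', rfl⟩; rfl⟩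
  set F : (Fin n → ℝ) → ℝ × ({j : Fin n // ¬ j = k} → ℝ) :=
    fun x => (x k, fun j => x j.val) with hF
  set ν : Measure ({j : Fin n // ¬ j = k} → ℝ) :=
    Measure.pi (fun _ => (volume : Measure ℝ)) with hν
  have hmp : MeasurePreserving F volume ((volume : Measure ℝ).prod ν) := by
    have h1 := measurePreserving_piEquivPiSubtypeProd
      (fun _ : Fin n => (volume : Measure ℝ)) (fun j => j = k)
    have h2 := (measurePreserving_piUnique
      (fun _ : {j : Fin n // j = k} => (volume : Measure ℝ))).prod
      (MeasurePreserving.id ν)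
    have hfin : ∀ (F1 F2 : Fintype {j : Fin n // j = k}),
        (@Measure.pi {j : Fin n // j = k} (fun _ => ℝ) F1 (fun _ => Real.measurableSpace)
          fun _ => volume)
        = (@Measure.pi {j : Fin n // j = k} (fun _ => ℝ) F2 (fun _ => Real.measurableSpace)
          fun _ => volume) := by
      intro F1 F2
      congr 1
      exact Subsingleton.elim _ _
    rw [hfin _ _] at h1
    have h3 := h2.comp h1
    have hFeq : F = (Prod.map (⇑(MeasurableEquiv.piUnique (fun _ : {j : Fin n // j = k} => ℝ)))
        id) ∘ ⇑(MeasurableEquiv.piEquivPiSubtypeProd (fun _ : Fin n => ℝ) (fun j => j = k)) := by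
      funext x
      rfl
    rw [hFeq, show (volume : Measure (Fin n → ℝ)) = Measure.pi fun _ => volume from volume_pi]
    exact h3
  set S : Set (ℝ × ({j : Fin n // ¬ j = k} → ℝ)) :=
    {y | ∀ j : {j : Fin n // ¬ j = k}, y.2 j ∈ bandSet r y.1 A B j.val} with hS
  have hSm : MeasurableSet S := by
    have heq : S = ⋂ j : {j : Fin n // ¬ j = k},
        {y : ℝ × ({j : Fin n // ¬ j = k} → ℝ) | y.2 j ∈ bandSet r y.1 A B j.val} := by
      ext y
      rw [Set.mem_iInter]
      exact ⟨fun h j => h j, fun h j => h j⟩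
    rw [heq]
    refine MeasurableSet.iInter (fun j => ?_)
    have hj : Measurable fun y : ℝ × ({j : Fin n // ¬ j = k} → ℝ) => y.2 j :=
      (measurable_pi_apply j).comp measurable_snd
    have hk : Measurable fun y : ℝ × ({j : Fin n // ¬ j = k} → ℝ) => y.1 := measurable_fst
    by_cases h1 : j.val ∈ A
    · have : {y : ℝ × ({j : Fin n // ¬ j = k} → ℝ) | y.2 j ∈ bandSet r y.1 A B j.val}
          = {y | 0 < y.2 j} ∩ {y | y.2 j < y.1 - r} := by
        ext y
        simp only [bandSet, if_pos h1, Set.mem_setOf_eq, Set.mem_Ioo, Set.mem_inter_iff]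
      rw [this]
      exact (measurableSet_lt measurable_const hj).inter
        (measurableSet_lt hj (hk.sub measurable_const))
    by_cases h2 : j.val ∈ B
    · have : {y : ℝ × ({j : Fin n // ¬ j = k} → ℝ) | y.2 j ∈ bandSet r y.1 A B j.val}
          = {y | y.1 - r < y.2 j} ∩ {y | y.2 j < y.1} := by
        ext y
        simp only [bandSet, if_neg h1, if_pos h2, Set.mem_setOf_eq, Set.mem_Ioo,
          Set.mem_inter_iff]
      rw [this]
      exact (measurableSet_lt (hk.sub measurable_const) hj).inter (measurableSet_lt hj hk)
    · have : {y : ℝ × ({j : Fin n // ¬ j = k} → ℝ) | y.2 j ∈ bandSet r y.1 A B j.val}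
          = {y | y.1 + r < y.2 j} ∩ {y | y.2 j < 1} := by
        ext y
        simp only [bandSet, if_neg h1, if_neg h2, Set.mem_setOf_eq, Set.mem_Ioo,
          Set.mem_inter_iff]
      rw [this]
      exact (measurableSet_lt (hk.add measurable_const) hj).inter
        (measurableSet_lt hj measurable_const)
  have hpre : piece r k A B = F ⁻¹' S := by
    ext x
    simp only [piece, Set.mem_setOf_eq, Set.mem_preimage, hF, hS]
    constructor
    · intro h j
      exact h j.val j.prop
    · intro h j hj
      exact h ⟨j, hj⟩
  rw [hpre, hmp.measure_preimage hSm.nullMeasurableSet]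
  rw [Measure.prod_apply hSm]
  set g : ℝ → ENNReal := fun t =>
    ENNReal.ofReal (t - r) ^ p * ENNReal.ofReal r ^ a * ENNReal.ofReal (1 - (t + r)) ^ q with hg
  have cardErase : (Finset.univ.erase k).card = n - 1 := by
    rw [Finset.card_erase_of_mem (Finset.mem_univ _), Finset.card_univ, Fintype.card_fin]
  have cardC : (((Finset.univ.erase k) \ A) \ B).card = q := by
    rw [Finset.card_sdiff_of_subset hB, Finset.card_sdiff_of_subset hA, cardErase, cardA, cardB]
    omega
  have hprod : ∀ t : ℝ, ν (Prod.mk t ⁻¹' S) = g t := by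
    intro t
    have hslice : (Prod.mk t ⁻¹' S)
        = Set.univ.pi (fun j : {j : Fin n // ¬ j = k} => bandSet r t A B j.val) := by
      ext z
      simp [hS, Set.mem_pi]
    rw [hslice, hν, Measure.pi_pi]
    rw [← Finset.prod_subtype (Finset.univ.erase k)
      (fun j => by simp [Finset.mem_erase]) (fun j => volume (bandSet r t A B j))]
    rw [← Finset.prod_sdiff hA, ← Finset.prod_sdiff hB]
    have eA : ∀ j ∈ A, volume (bandSet r t A B j) = ENNReal.ofReal (t - r) := by
      intro j hj
      rw [bandSet, if_pos hj, Real.volume_Ioo, sub_zero]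
    have eB : ∀ j ∈ B, volume (bandSet r t A B j) = ENNReal.ofReal r := by
      intro j hj
      have hjA : j ∉ A := (Finset.mem_sdiff.mp (hB hj)).2
      rw [bandSet, if_neg hjA, if_pos hj, Real.volume_Ioo]
      congr 1
      ring
    have eC : ∀ j ∈ ((Finset.univ.erase k) \ A) \ B,
        volume (bandSet r t A B j) = ENNReal.ofReal (1 - (t + r)) := by
      intro j hj
      rw [Finset.mem_sdiff] at hj
      have hjA : j ∉ A := (Finset.mem_sdiff.mp hj.1).2
      rw [bandSet, if_neg hjA, if_neg hj.2, Real.volume_Ioo]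
    rw [Finset.prod_congr rfl eA, Finset.prod_congr rfl eB, Finset.prod_congr rfl eC]
    rw [Finset.prod_const, Finset.prod_const, Finset.prod_const, cardA, cardB, cardC]
    rw [hg]
    ring
  rw [show (fun t => ν (Prod.mk t ⁻¹' S)) = g from funext hprod]
  have hgzero : ∀ t ∈ (Set.Ioo r (1 - r))ᶜ, g t = (fun _ : ℝ => (0 : ENNReal)) t := by
    intro t ht
    rw [Set.mem_compl_iff, Set.mem_Ioo, not_and_or] at ht
    push_neg at ht
    show ENNReal.ofReal (t - r) ^ p * ENNReal.ofReal r ^ a * ENNReal.ofReal (1 - (t + r)) ^ q = 0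
    rcases ht with h | h
    · have h0 : ENNReal.ofReal (t - r) = 0 := by
        rw [ENNReal.ofReal_eq_zero]; linarith
      rw [h0, zero_pow (by omega), zero_mul, zero_mul]
    · have h0 : ENNReal.ofReal (1 - (t + r)) = 0 := by
        rw [ENNReal.ofReal_eq_zero]; linarith
      rw [h0, zero_pow (by omega), mul_zero]
  have hsplit : ∫⁻ t, g t = ∫⁻ t in Set.Ioo r (1 - r), g t := by
    rw [← lintegral_add_compl g (measurableSet_Ioo : MeasurableSet (Set.Ioo r (1 - r)))]
    rw [setLIntegral_congr_fun measurableSet_Ioo.compl hgzero]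
    simp
  rw [hsplit]
  set h : ℝ → ℝ := fun t => r ^ a * ((t - r) ^ p * (1 - (t + r)) ^ q) with hh
  have hpt : ∀ t ∈ Set.Ioo r (1 - r), g t = ENNReal.ofReal (h t) := by
    intro t ht
    rw [Set.mem_Ioo] at ht
    show ENNReal.ofReal (t - r) ^ p * ENNReal.ofReal r ^ a * ENNReal.ofReal (1 - (t + r)) ^ q
      = ENNReal.ofReal (r ^ a * ((t - r) ^ p * (1 - (t + r)) ^ q))
    rw [← ENNReal.ofReal_pow (by linarith : (0:ℝ) ≤ t - r),
      ← ENNReal.ofReal_pow (le_of_lt hr0),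
      ← ENNReal.ofReal_pow (by linarith : (0:ℝ) ≤ 1 - (t + r)),
      ← ENNReal.ofReal_mul (pow_nonneg (by linarith : (0:ℝ) ≤ t - r) p),
      ← ENNReal.ofReal_mul (mul_nonneg (pow_nonneg (by linarith : (0:ℝ) ≤ t - r) p)
        (pow_nonneg hr0.le a))]
    congr 1
    ring
  rw [setLIntegral_congr_fun measurableSet_Ioo hpt]
  have hcont : Continuous h := by
    rw [hh]
    exact continuous_const.mul (((continuous_id.sub continuous_const).pow p).mul
      ((continuous_const.sub (continuous_id.add continuous_const)).pow q))
  have hint : IntegrableOn h (Set.Ioo r (1 - r)) volume :=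
    (hcont.integrableOn_Icc).mono_set Set.Ioo_subset_Icc_self
  have hnn : 0 ≤ᶠ[MeasureTheory.ae (volume.restrict (Set.Ioo r (1 - r)))] h := by
    rw [Filter.EventuallyLE, ae_restrict_iff' measurableSet_Ioo]
    refine Filter.Eventually.of_forall (fun t ht => ?_)
    rw [Set.mem_Ioo] at ht
    show (0:ℝ) ≤ r ^ a * ((t - r) ^ p * (1 - (t + r)) ^ q)
    have h1 : (0:ℝ) ≤ t - r := by linarith
    have h2 : (0:ℝ) ≤ 1 - (t + r) := by linarith
    positivity
  rw [← ofReal_integral_eq_lintegral_ofReal hint hnn]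
  have hrle : r ≤ 1 - r := by linarith
  have hieq : ∫ t in Set.Ioo r (1 - r), h t
      = r ^ a * (((p.factorial : ℝ) * (q.factorial : ℝ) / ((p + q + 1).factorial : ℝ))
          * (1 - 2*r) ^ (p + q + 1)) := by
    rw [← integral_Ioc_eq_integral_Ioo, ← intervalIntegral.integral_of_le hrle]
    rw [hh]
    rw [intervalIntegral.integral_const_mul]
    have hre : (fun t : ℝ => (t - r) ^ p * (1 - (t + r)) ^ q)
        = (fun t : ℝ => (fun u => u ^ p * ((1 - 2*r) - u) ^ q) (t - r)) := by
      funext t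
      simp only
      congr 2
      ring
    rw [hre]
    rw [intervalIntegral.integral_comp_sub_right (fun u => u ^ p * ((1 - 2*r) - u) ^ q) r]
    rw [show r - r = (0:ℝ) by ring, show 1 - r - r = 1 - 2*r by ring]
    rw [beta_integral (1 - 2*r) q p]
  rw [hieq]
  have hexp : p + q + 1 = n - a := by omega
  rw [hexp]
  congr 1
  ring
end PieceVol
section Disjoint
variable {n : ℕ} (r : ℝ)

lemma piece_filters (hr0 : 0 < r) (x : Fin n → ℝ) (k : Fin n) (A B : Finset (Fin n))
    (hA : A ⊆ Finset.univ.erase k) (hB : B ⊆ (Finset.univ.erase k) \ A)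
    (hx : x ∈ piece r k A B) :
    Finset.univ.filter (fun j => x j < x k - r) = A ∧
      Finset.univ.filter (fun j => x j < x k) = A ∪ B := by
  set t := x k with htdef
  have hband : ∀ j : Fin n, j ≠ k → x j ∈ bandSet r t A B j := hx
  have memA : ∀ j ∈ A, x j ∈ Set.Ioo 0 (t - r) := by
    intro j hj
    have hjk : j ≠ k := Finset.ne_of_mem_erase (hA hj)
    have := hband j hjk
    rwa [bandSet, if_pos hj] at this
  have memB : ∀ j ∈ B, x j ∈ Set.Ioo (t - r) t := by
    intro j hj
    have hj' := hB hj
    rw [Finset.mem_sdiff] at hj'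
    have hjk : j ≠ k := Finset.ne_of_mem_erase hj'.1
    have := hband j hjk
    rwa [bandSet, if_neg hj'.2, if_pos hj] at this
  have memC : ∀ j : Fin n, j ≠ k → j ∉ A → j ∉ B → x j ∈ Set.Ioo (t + r) 1 := by
    intro j hjk hjA hjB
    have := hband j hjk
    rwa [bandSet, if_neg hjA, if_neg hjB] at this
  constructor
  · ext j
    rw [Finset.mem_filter]
    constructor
    · rintro ⟨-, hlt⟩
      by_contra hjA'
      rcases eq_or_ne j k with rfl | hjk
      · rw [← htdef] at hlt; linarith
      by_cases hB' : j ∈ B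
      · have := memB j hB'; rw [Set.mem_Ioo] at this; linarith [this.1]
      · have := memC j hjk hjA' hB'; rw [Set.mem_Ioo] at this; linarith [this.1]
    · intro hjA'
      have := memA j hjA'; rw [Set.mem_Ioo] at this
      exact ⟨Finset.mem_univ _, this.2⟩
  · ext j
    rw [Finset.mem_filter, Finset.mem_union]
    constructor
    · rintro ⟨-, hlt⟩
      by_contra hjAB
      push_neg at hjAB
      rcases eq_or_ne j k with rfl | hjk
      · rw [← htdef] at hlt; linarith
      have := memC j hjk hjAB.1 hjAB.2; rw [Set.mem_Ioo] at this; linarith [this.1]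
    · rintro (hj | hj)
      · have := memA j hj; rw [Set.mem_Ioo] at this
        exact ⟨Finset.mem_univ _, by linarith [this.2]⟩
      · have := memB j hj; rw [Set.mem_Ioo] at this
        exact ⟨Finset.mem_univ _, this.2⟩

lemma piece_nonmem_k (hr0 : 0 < r) (x : Fin n → ℝ) (k : Fin n) (A B : Finset (Fin n))
    (hA : A ⊆ Finset.univ.erase k) (hB : B ⊆ (Finset.univ.erase k) \ A)
    (hx : x ∈ piece r k A B) :
    k ∉ Finset.univ.filter (fun j => x j < x k) := by
  rw [Finset.mem_filter]
  push_neg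
  intro _
  exact le_refl _

lemma piece_disjoint (hr0 : 0 < r) (i a : ℕ) (hi : 2 ≤ i) (hin : i ≤ n - 1) (ha : a + 2 ≤ i)
    (k k' : Fin n) (A B A' B' : Finset (Fin n))
    (hA : A ⊆ Finset.univ.erase k) (hB : B ⊆ (Finset.univ.erase k) \ A)
    (cardA : A.card = i - 1 - a) (cardB : B.card = a)
    (hA' : A' ⊆ Finset.univ.erase k') (hB' : B' ⊆ (Finset.univ.erase k') \ A')
    (cardA' : A'.card = i - 1 - a) (cardB' : B'.card = a)
    (hne : ¬ (k = k' ∧ A = A' ∧ B = B')) :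
    Disjoint (piece r k A B) (piece r k' A' B') := by
  rw [Set.disjoint_left]
  intro x hx hx'
  apply hne
  obtain ⟨f1, f2⟩ := piece_filters r hr0 x k A B hA hB hx
  obtain ⟨f1', f2'⟩ := piece_filters r hr0 x k' A' B' hA' hB' hx'
  have hkk : k = k' := by
    by_contra hkk
    -- x k ≠ x k'
    have hxkk : x k' ≠ x k := by
      have hband : x k' ∈ bandSet r (x k) A B k' := hx k' (Ne.symm hkk)
      rw [bandSet] at hband
      split_ifs at hband with h1 h2 <;> rw [Set.mem_Ioo] at hband
      · intro he2; linarith [hband.2]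
      · intro he2; linarith [hband.2]
      · intro he2; linarith [hband.1]
    rcases lt_or_gt_of_ne hxkk with hlt | hgt
    · -- x k' < x k
      have hsub : Finset.univ.filter (fun j => x j < x k')
          ⊂ Finset.univ.filter (fun j => x j < x k) := by
        constructor
        · intro j hj
          rw [Finset.mem_filter] at hj ⊢
          exact ⟨hj.1, by linarith [hj.2]⟩
        · intro hcon
          have hk'mem : k' ∈ Finset.univ.filter (fun j => x j < x k) :=
            Finset.mem_filter.mpr ⟨Finset.mem_univ _, hlt⟩
          have := hcon hk'mem
          rw [Finset.mem_filter] at this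
          linarith [this.2]
      have hc := Finset.card_lt_card hsub
      rw [f2, f2', Finset.card_union_of_disjoint, Finset.card_union_of_disjoint] at hc
      · rw [cardA, cardB, cardA', cardB'] at hc; omega
      · rw [Finset.disjoint_left]; intro j hj1 hj2
        exact (Finset.mem_sdiff.mp (hB hj2)).2 hj1
      · rw [Finset.disjoint_left]; intro j hj1 hj2
        exact (Finset.mem_sdiff.mp (hB' hj2)).2 hj1
    · -- x k < x k'
      have hsub : Finset.univ.filter (fun j => x j < x k)
          ⊂ Finset.univ.filter (fun j => x j < x k') := by
        constructor
        · intro j hj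
          rw [Finset.mem_filter] at hj ⊢
          exact ⟨hj.1, by linarith [hj.2]⟩
        · intro hcon
          have hkmem : k ∈ Finset.univ.filter (fun j => x j < x k') :=
            Finset.mem_filter.mpr ⟨Finset.mem_univ _, hgt⟩
          have := hcon hkmem
          rw [Finset.mem_filter] at this
          linarith [this.2]
      have hc := Finset.card_lt_card hsub
      rw [f2, f2', Finset.card_union_of_disjoint, Finset.card_union_of_disjoint] at hc
      · rw [cardA, cardB, cardA', cardB'] at hc; omega
      · rw [Finset.disjoint_left]; intro j hj1 hj2
        exact (Finset.mem_sdiff.mp (hB' hj2)).2 hj1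
      · rw [Finset.disjoint_left]; intro j hj1 hj2
        exact (Finset.mem_sdiff.mp (hB hj2)).2 hj1
  subst hkk
  have hAA : A = A' := by rw [← f1, ← f1']
  have hBB : B = B' := by
    have h2 : A ∪ B = A ∪ B' := by rw [← f2, hAA, ← f2']
    ext j
    constructor
    · intro hj
      have hjA : j ∉ A := (Finset.mem_sdiff.mp (hB hj)).2
      have : j ∈ A ∪ B' := h2 ▸ Finset.mem_union_right A hj
      rcases Finset.mem_union.mp this with h | h
      · exact absurd h hjA
      · exact h
    · intro hj
      have hjA : j ∉ A' := (Finset.mem_sdiff.mp (hB' hj)).2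
      rw [hAA] at h2
      have : j ∈ A' ∪ B := h2.symm ▸ Finset.mem_union_right A' hj
      rcases Finset.mem_union.mp this with h | h
      · exact absurd h hjA
      · exact h
  exact ⟨rfl, hAA, hBB⟩
end Disjoint
section Bad
variable {n : ℕ}

def badSet (r : ℝ) : Set (Fin n → ℝ) :=
  (⋃ j : Fin n, ⋃ j' : Fin n, ⋃ _ : j ≠ j', ({x | x j = x j'} ∪ {x | x j - x j' = r})) ∪
  (⋃ j : Fin n, ({x | x j = 0} ∪ {x | x j = 1}))

lemma badSet_null (r : ℝ) : volume (badSet (n := n) r) = 0 := by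
  rw [badSet]
  refine measure_union_null ?_ ?_
  · refine measure_iUnion_null fun j => measure_iUnion_null fun j' => ?_
    by_cases hjj : j = j'
    · subst hjj
      have he : (⋃ _ : j ≠ j, ({x : Fin n → ℝ | x j = x j} ∪ {x | x j - x j = r})) = ∅ := by
        ext x; simp
      rw [he]
      exact measure_empty
    · refine measure_mono_null (Set.iUnion_subset fun _ => subset_rfl)
        (measure_union_null ?_ ?_)
      · have he : {x : Fin n → ℝ | x j = x j'} = {x | x j - x j' = 0} := by
          ext x; simp [sub_eq_zero]
        rw [he]
        exact null_diff_eq j j' hjj 0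
      · exact null_diff_eq j j' hjj r
  · exact measure_iUnion_null fun j =>
      measure_union_null (null_coord_eq j 0) (null_coord_eq j 1)

lemma not_bad {r : ℝ} {x : Fin n → ℝ} (hx : x ∉ badSet r) :
    Function.Injective x ∧ (∀ j j' : Fin n, j ≠ j' → x j - x j' ≠ r) ∧
      (∀ j, x j ≠ 0) ∧ (∀ j, x j ≠ 1) := by
  refine ⟨?_, ?_, ?_, ?_⟩
  · intro j j' he
    by_contra hne
    exact hx (Or.inl (Set.mem_iUnion.mpr ⟨j, Set.mem_iUnion.mpr ⟨j',
      Set.mem_iUnion.mpr ⟨hne, Or.inl he⟩⟩⟩))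
  · intro j j' hne he
    exact hx (Or.inl (Set.mem_iUnion.mpr ⟨j, Set.mem_iUnion.mpr ⟨j',
      Set.mem_iUnion.mpr ⟨hne, Or.inr he⟩⟩⟩))
  · intro j he
    exact hx (Or.inr (Set.mem_iUnion.mpr ⟨j, Or.inl he⟩))
  · intro j he
    exact hx (Or.inr (Set.mem_iUnion.mpr ⟨j, Or.inr he⟩))
end Bad

section CoverEq
variable {n : ℕ}

lemma cover_eq (r : ℝ) (hr0 : 0 < r) (i a : ℕ) (hi : 2 ≤ i) (hin : i ≤ n - 1)
    (ha : a + 2 ≤ i) :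
    ({x : Fin n → ℝ | Lcount r x i = a ∧ Lcount r x (i + 1) = 0} ∩
        (Set.univ.pi fun _ : Fin n => Set.Icc (0 : ℝ) 1)) \ badSet r
      = (⋃ k ∈ (Finset.univ : Finset (Fin n)),
          ⋃ A ∈ Finset.powersetCard (i - 1 - a) (Finset.univ.erase k),
          ⋃ B ∈ Finset.powersetCard a ((Finset.univ.erase k) \ A),
          piece r k A B) \ badSet r := by
  ext x
  simp only [Set.mem_diff, Set.mem_inter_iff, Set.mem_setOf_eq]
  constructor
  · rintro ⟨⟨⟨h1, h2⟩, hcube⟩, hbad⟩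
    refine ⟨?_, hbad⟩
    obtain ⟨hinj, hner, h0, hone⟩ := not_bad hbad
    have hcube' : ∀ j, x j ∈ Set.Icc (0:ℝ) 1 := fun j => by
      have := Set.mem_univ_pi.mp hcube j
      exact this
    obtain ⟨q1, q2, q3⟩ := (event_iff x hr0 hi hin ha hinj hner).mp ⟨h1, h2⟩
    obtain ⟨k, A, B, hA, hB, cardA, cardB, hpiece⟩ :=
      cover_forward r i a x hr0 hi hin ha hinj hner hcube' h0 hone q1 q2 q3
    refine Set.mem_biUnion (Finset.mem_univ k) ?_
    refine Set.mem_biUnion (Finset.mem_powersetCard.mpr ⟨hA, cardA⟩) ?_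
    exact Set.mem_biUnion (Finset.mem_powersetCard.mpr ⟨hB, cardB⟩) hpiece
  · rintro ⟨hU, hbad⟩
    refine ⟨?_, hbad⟩
    obtain ⟨hinj, hner, h0, hone⟩ := not_bad hbad
    simp only [Set.mem_iUnion] at hU
    obtain ⟨k, -, A, hAm, B, hBm, hpiece⟩ := hU
    obtain ⟨hA, cardA⟩ := Finset.mem_powersetCard.mp hAm
    obtain ⟨hB, cardB⟩ := Finset.mem_powersetCard.mp hBm
    obtain ⟨hcube, q1, q2, q3⟩ := cover_backward r i a x hr0 hi hin ha hinj hner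
      k A B hA hB cardA cardB hpiece
    refine ⟨(event_iff x hr0 hi hin ha hinj hner).mpr ⟨q1, q2, q3⟩, ?_⟩
    exact Set.mem_univ_pi.mpr fun j => hcube j
end CoverEq

section Count

lemma natCast_mul_ofReal (m : ℕ) (y : ℝ) :
    (m : ENNReal) * ENNReal.ofReal y = ENNReal.ofReal (m * y) := by
  rw [ENNReal.ofReal_mul (Nat.cast_nonneg m), ENNReal.ofReal_natCast]

lemma key_nat (p a q : ℕ) :
    (p + a + q + 1) * ((p + a + q).choose p) * ((a + q).choose a) * p.factorial * q.factorial
      = ((p + a + q + 1).choose a) * (p + q + 1).factorial := by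
  apply Nat.eq_of_mul_eq_mul_right (Nat.factorial_pos a)
  have hc1 : (a + q).choose a * a.factorial * q.factorial = (a + q).factorial := by
    have := Nat.choose_mul_factorial_mul_factorial (Nat.le_add_right a q)
    rwa [Nat.add_sub_cancel_left] at this
  have hc2 : (p + a + q).choose p * p.factorial * (a + q).factorial
      = (p + a + q).factorial := by
    have h := Nat.choose_mul_factorial_mul_factorial
      (Nat.le_add_right p (a + q))
    rw [Nat.add_sub_cancel_left] at h
    rwa [show p + (a + q) = p + a + q by omega] at h
  have hc3 : (p + a + q + 1).choose a * a.factorial * (p + q + 1).factorial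
      = (p + a + q + 1).factorial := by
    have h := Nat.choose_mul_factorial_mul_factorial
      (show a ≤ p + a + q + 1 by omega)
    rwa [show p + a + q + 1 - a = p + q + 1 by omega] at h
  calc (p + a + q + 1) * ((p + a + q).choose p) * ((a + q).choose a) * p.factorial
        * q.factorial * a.factorial
      = (p + a + q + 1) * (((p + a + q).choose p) * p.factorial
          * ((a + q).choose a * a.factorial * q.factorial)) := by ring
    _ = (p + a + q + 1) * (((p + a + q).choose p) * p.factorial * (a + q).factorial) := by
        rw [hc1]
    _ = (p + a + q + 1) * (p + a + q).factorial := by rw [hc2]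
    _ = (p + a + q + 1).factorial := (Nat.factorial_succ _).symm
    _ = (p + a + q + 1).choose a * a.factorial * (p + q + 1).factorial := hc3.symm
    _ = (p + a + q + 1).choose a * (p + q + 1).factorial * a.factorial := by ring
end Count
/-- for i.i.d. uniform points on `[0,1]`, `r < 1/2`, `2 ≤ i ≤ n−1` and
`0 ≤ a ≤ i−2`, the probability that `L_i = a` and `L_{i+1} = 0` equals
`C(n,a)·r^a·(1−2r)^{n−a}`. -/
theorem prob_Li_eq_a_and_Lsucc_eq_zero (n : ℕ) (r : ℝ) (hr0 : 0 < r) (hr : r < 1 / 2)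
    (i a : ℕ) (hi : 2 ≤ i) (hin : i ≤ n - 1) (ha : a + 2 ≤ i) :
    (volume.restrict (Set.univ.pi fun _ : Fin n => Set.Icc (0 : ℝ) 1))
        {x : Fin n → ℝ | Lcount r x i = a ∧ Lcount r x (i + 1) = 0}
      = ENNReal.ofReal ((n.choose a : ℝ) * r ^ a * (1 - 2 * r) ^ (n - a)) := by
  classical
  have hn : i < n := by omega
  have hcubeM : MeasurableSet (Set.univ.pi fun _ : Fin n => Set.Icc (0 : ℝ) 1) :=
    MeasurableSet.univ_pi (fun _ => measurableSet_Icc)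
  rw [Measure.restrict_apply' hcubeM]
  rw [← measure_diff_null (badSet_null r)]
  rw [cover_eq r hr0 i a hi hin ha]
  rw [measure_diff_null (badSet_null r)]
  have hpd : ∀ (k k' : Fin n) (A B A' B' : Finset (Fin n)),
      A ∈ Finset.powersetCard (i - 1 - a) (Finset.univ.erase k) →
      B ∈ Finset.powersetCard a ((Finset.univ.erase k) \ A) →
      A' ∈ Finset.powersetCard (i - 1 - a) (Finset.univ.erase k') →
      B' ∈ Finset.powersetCard a ((Finset.univ.erase k') \ A') →
      ¬ (k = k' ∧ A = A' ∧ B = B') →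
      Disjoint (piece r k A B) (piece r k' A' B') := by
    intro k k' A B A' B' hAm hBm hAm' hBm' hne
    obtain ⟨hA, cardA⟩ := Finset.mem_powersetCard.mp hAm
    obtain ⟨hB, cardB⟩ := Finset.mem_powersetCard.mp hBm
    obtain ⟨hA', cardA'⟩ := Finset.mem_powersetCard.mp hAm'
    obtain ⟨hB', cardB'⟩ := Finset.mem_powersetCard.mp hBm'
    exact piece_disjoint r hr0 i a hi hin ha k k' A B A' B' hA hB cardA cardB
      hA' hB' cardA' cardB' hne
  have hvolB : ∀ (k : Fin n) (A : Finset (Fin n)),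
      A ∈ Finset.powersetCard (i - 1 - a) (Finset.univ.erase k) →
      volume (⋃ B ∈ Finset.powersetCard a ((Finset.univ.erase k) \ A), piece r k A B)
        = ((n - 1 - (i - 1 - a)).choose a) •
            ENNReal.ofReal (r ^ a * (((i - 1 - a).factorial : ℝ) * ((n - i).factorial : ℝ)
              / ((n - a).factorial : ℝ)) * (1 - 2 * r) ^ (n - a)) := by
    intro k A hAm
    obtain ⟨hA, cardA⟩ := Finset.mem_powersetCard.mp hAm
    have hd : (↑(Finset.powersetCard a ((Finset.univ.erase k) \ A)) :
        Set (Finset (Fin n))).PairwiseDisjoint (fun B => piece r k A B) := by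
      intro B hBm B' hBm' hBB
      exact hpd k k A B A B' hAm (Finset.mem_coe.mp hBm) hAm (Finset.mem_coe.mp hBm')
        (fun h => hBB h.2.2)
    rw [measure_biUnion_finset hd (fun B _ => measurableSet_piece r k A B)]
    have hconst : ∀ B ∈ Finset.powersetCard a ((Finset.univ.erase k) \ A),
        volume (piece r k A B)
          = ENNReal.ofReal (r ^ a * (((i - 1 - a).factorial : ℝ) * ((n - i).factorial : ℝ)
              / ((n - a).factorial : ℝ)) * (1 - 2 * r) ^ (n - a)) := by
      intro B hBm
      obtain ⟨hB, cardB⟩ := Finset.mem_powersetCard.mp hBm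
      exact volume_piece r hr0 hr i a hi hin ha k A B hA hB cardA cardB
    rw [Finset.sum_congr rfl hconst, Finset.sum_const, Finset.card_powersetCard,
      Finset.card_sdiff_of_subset hA, Finset.card_erase_of_mem (Finset.mem_univ _),
      Finset.card_univ, Fintype.card_fin, cardA]
  have hvolK : ∀ k ∈ (Finset.univ : Finset (Fin n)),
      volume (⋃ A ∈ Finset.powersetCard (i - 1 - a) (Finset.univ.erase k),
          ⋃ B ∈ Finset.powersetCard a ((Finset.univ.erase k) \ A), piece r k A B)
        = ((n - 1).choose (i - 1 - a)) • (((n - 1 - (i - 1 - a)).choose a) •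
            ENNReal.ofReal (r ^ a * (((i - 1 - a).factorial : ℝ) * ((n - i).factorial : ℝ)
              / ((n - a).factorial : ℝ)) * (1 - 2 * r) ^ (n - a))) := by
    intro k _
    have hd : (↑(Finset.powersetCard (i - 1 - a) (Finset.univ.erase k)) :
        Set (Finset (Fin n))).PairwiseDisjoint
          (fun A => ⋃ B ∈ Finset.powersetCard a ((Finset.univ.erase k) \ A), piece r k A B) := by
      intro A hAm A' hAm' hAA
      simp only [Function.onFun, Set.disjoint_iUnion_left, Set.disjoint_iUnion_right]
      intro B' hBm' B hBm
      exact hpd k k A B A' B' (Finset.mem_coe.mp hAm) hBm (Finset.mem_coe.mp hAm') hBm'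
        (fun h => hAA h.2.1)
    rw [measure_biUnion_finset hd (fun A _ => Finset.measurableSet_biUnion _
      (fun B _ => measurableSet_piece r k A B))]
    rw [Finset.sum_congr rfl (hvolB k), Finset.sum_const, Finset.card_powersetCard,
      Finset.card_erase_of_mem (Finset.mem_univ _), Finset.card_univ, Fintype.card_fin]
  have hdK : (↑(Finset.univ : Finset (Fin n)) : Set (Fin n)).PairwiseDisjoint
      (fun k => ⋃ A ∈ Finset.powersetCard (i - 1 - a) (Finset.univ.erase k),
        ⋃ B ∈ Finset.powersetCard a ((Finset.univ.erase k) \ A), piece r k A B) := by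
    intro k _ k' _ hkk
    simp only [Function.onFun, Set.disjoint_iUnion_left, Set.disjoint_iUnion_right]
    intro A' hAm' B' hBm' A hAm B hBm
    exact hpd k k' A B A' B' hAm hBm hAm' hBm' (fun h => hkk h.1)
  rw [measure_biUnion_finset hdK (fun k _ => Finset.measurableSet_biUnion _
    (fun A _ => Finset.measurableSet_biUnion _ (fun B _ => measurableSet_piece r k A B)))]
  rw [Finset.sum_congr rfl hvolK, Finset.sum_const, Finset.card_univ, Fintype.card_fin]
  rw [nsmul_eq_mul, nsmul_eq_mul, nsmul_eq_mul]
  rw [natCast_mul_ofReal, natCast_mul_ofReal, natCast_mul_ofReal]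
  congr 1
  have hKeyNat : n * ((n - 1).choose (i - 1 - a)) * ((n - 1 - (i - 1 - a)).choose a)
      * (i - 1 - a).factorial * (n - i).factorial = n.choose a * (n - a).factorial := by
    obtain ⟨P, hP⟩ : ∃ P, i - 1 - a = P := ⟨_, rfl⟩
    obtain ⟨Q, hQ⟩ : ∃ Q, n - i = Q := ⟨_, rfl⟩
    rw [hP, hQ]
    rw [show n - 1 - P = a + Q by omega, show n - 1 = P + a + Q by omega,
      show n - a = P + Q + 1 by omega, show n = P + a + Q + 1 by omega]
    exact key_nat P a Q
  have hKey : ((n : ℝ)) * (((n - 1).choose (i - 1 - a) : ℕ) : ℝ)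
      * (((n - 1 - (i - 1 - a)).choose a : ℕ) : ℝ) * (((i - 1 - a).factorial : ℕ) : ℝ)
      * (((n - i).factorial : ℕ) : ℝ)
      = ((n.choose a : ℕ) : ℝ) * (((n - a).factorial : ℕ) : ℝ) := by
    exact_mod_cast congrArg (Nat.cast (R := ℝ)) hKeyNat
  have hfac : (((n - a).factorial : ℕ) : ℝ) ≠ 0 := Nat.cast_ne_zero.mpr (Nat.factorial_ne_zero _)
  field_simp
  linear_combination ((1 - 2 * r) ^ (n - a)) * hKey
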